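/- If W follows a Gamma(r, α) distribution, then its zero-biased distribution is Gamma(r+1, α). -/

import Mathlib

open MeasureTheory ProbabilityTheory Real

noncomputable section

/-- `ν` is the size-biased distribution of `μ`: `E[V f(V)] = E[V] · E[f(V^s)]`
for all bounded measurable test functions `f`. -/
def IsSizeBiased (μ ν : Measure ℝ) : Prop :=
  ∀ f : ℝ → ℝ, Measurable f → (∀ x, |f x| ≤ 1) →
    ∫ x, x * f x ∂μ = (∫ x, x ∂μ) * ∫ x, f x ∂ν

/-- `ν` is the zero-biased distribution of `μ`: `E[(W−μ) f(W)] = σ² · E[f'(W^z)]`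
for all differentiable test functions `f` with bounded derivative. -/
def IsZeroBiased (μ ν : Measure ℝ) : Prop :=
  ∀ f : ℝ → ℝ, Differentiable ℝ f → (∀ x, |deriv f x| ≤ 1) →
    ∫ x, (x - ∫ y, y ∂μ) * f x ∂μ
      = (∫ x, (x - ∫ y, y ∂μ) ^ 2 ∂μ) * ∫ x, deriv f x ∂ν
open Set Filter Topology
open scoped ENNReal NNReal

namespace GammaZB

lemma integrable_rpow_exp {α : ℝ} (hα : 0 < α) {s : ℝ} (hs : -1 < s) :
    IntegrableOn (fun x : ℝ => x ^ s * exp (-(α * x))) (Ioi 0) := by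
  have h := integrableOn_rpow_mul_exp_neg_mul_rpow hs zero_lt_one hα
  refine h.congr_fun (fun x hx => ?_) measurableSet_Ioi
  simp only [Real.rpow_one, neg_mul]

lemma J_val {α : ℝ} (hα : 0 < α) {s : ℝ} (hs : 0 < s) :
    ∫ x in Ioi 0, x ^ (s - 1) * exp (-(α * x)) = (1 / α) ^ s * Gamma s :=
  integral_rpow_mul_exp_neg_mul_Ioi hs hα

lemma integral_gamma_eq {r α : ℝ} (hr : 0 < r) (hα : 0 < α) (g : ℝ → ℝ) :
    ∫ x, g x ∂(gammaMeasure r α)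
      = (α ^ r / Gamma r) * ∫ x in Ioi 0, x ^ (r - 1) * exp (-(α * x)) * g x := by
  rw [gammaMeasure]
  have hd : gammaPDF r α = fun x => ((gammaPDFReal r α x).toNNReal : ℝ≥0∞) := rfl
  rw [hd, integral_withDensity_eq_integral_smul ((measurable_gammaPDFReal r α).real_toNNReal)]
  have h1 : ∀ x : ℝ, (gammaPDFReal r α x).toNNReal • g x = gammaPDFReal r α x * g x := by
    intro x
    rw [NNReal.smul_def, smul_eq_mul, Real.coe_toNNReal _ (gammaPDFReal_nonneg hr hα x)]
  simp_rw [h1]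
  have h0 : ∀ᵐ x : ℝ, x ≠ 0 := by
    rw [ae_iff]
    simp [not_not, setOf_eq_eq_singleton]
  rw [← setIntegral_eq_integral_of_ae_compl_eq_zero
      (s := Ioi 0) (f := fun x => gammaPDFReal r α x * g x) ?_]
  · rw [← integral_const_mul]
    refine setIntegral_congr_fun measurableSet_Ioi fun x hx => ?_
    rw [gammaPDFReal, if_pos (le_of_lt hx)]
    ring
  · filter_upwards [h0] with x hx0 hx
    have hneg : x < 0 := lt_of_le_of_ne (not_lt.mp hx) hx0
    rw [gammaPDFReal, if_neg (not_le.mpr hneg), zero_mul]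

lemma mean_gamma {r α : ℝ} (hr : 0 < r) (hα : 0 < α) :
    ∫ x, x ∂(gammaMeasure r α) = r / α := by
  rw [integral_gamma_eq hr hα]
  have hcg : ∀ x ∈ Ioi (0:ℝ), x ^ (r - 1) * exp (-(α * x)) * x
      = x ^ ((r + 1) - 1) * exp (-(α * x)) := by
    intro x hx
    rw [mul_right_comm, ← Real.rpow_add_one (ne_of_gt hx)]
    norm_num
  rw [setIntegral_congr_fun measurableSet_Ioi hcg, J_val hα (by linarith : (0:ℝ) < r + 1),
    Gamma_add_one hr.ne']
  have hΓ := Gamma_pos_of_pos hr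
  have hp : (0:ℝ) < α ^ r := Real.rpow_pos_of_pos hα r
  have h1 : (1 / α) ^ (r + 1) = 1 / (α ^ r * α) := by
    rw [Real.div_rpow zero_le_one hα.le, Real.one_rpow, Real.rpow_add_one hα.ne']
  rw [h1]
  field_simp

lemma var_gamma {r α : ℝ} (hr : 0 < r) (hα : 0 < α) :
    ∫ x, (x - r / α) ^ 2 ∂(gammaMeasure r α) = r / α ^ 2 := by
  rw [integral_gamma_eq hr hα]
  have hcg : ∀ x ∈ Ioi (0:ℝ), x ^ (r - 1) * exp (-(α * x)) * (x - r / α) ^ 2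
      = x ^ ((r + 2) - 1) * exp (-(α * x))
        - (2 * (r / α)) * (x ^ ((r + 1) - 1) * exp (-(α * x)))
        + (r / α) ^ 2 * (x ^ (r - 1) * exp (-(α * x))) := by
    intro x hx
    have e1 : x ^ ((r + 1) - 1) = x ^ (r - 1) * x := by
      rw [show (r + 1) - 1 = (r - 1) + 1 by ring, Real.rpow_add_one (ne_of_gt hx)]
    have e2 : x ^ ((r + 2) - 1) = x ^ (r - 1) * x ^ (2:ℕ) := by
      rw [show (r + 2) - 1 = (r - 1) + 2 by ring, ← Real.rpow_natCast x 2,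
        ← Real.rpow_add hx]
      norm_num
    rw [e1, e2]
    ring
  rw [setIntegral_congr_fun measurableSet_Ioi hcg]
  have I0 : IntegrableOn (fun x : ℝ => x ^ (r - 1) * exp (-(α * x))) (Ioi 0) :=
    integrable_rpow_exp hα (by linarith)
  have I1 : IntegrableOn (fun x : ℝ => x ^ ((r + 1) - 1) * exp (-(α * x))) (Ioi 0) :=
    integrable_rpow_exp hα (by linarith)
  have I2 : IntegrableOn (fun x : ℝ => x ^ ((r + 2) - 1) * exp (-(α * x))) (Ioi 0) :=
    integrable_rpow_exp hα (by linarith)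
  have Isub : IntegrableOn (fun x : ℝ => x ^ ((r + 2) - 1) * exp (-(α * x))
      - 2 * (r / α) * (x ^ ((r + 1) - 1) * exp (-(α * x)))) (Ioi 0) :=
    I2.sub (I1.const_mul _)
  rw [integral_add Isub (I0.const_mul _), integral_sub I2 (I1.const_mul _),
    integral_const_mul, integral_const_mul,
    J_val hα (by linarith : (0:ℝ) < r + 2), J_val hα (by linarith : (0:ℝ) < r + 1),
    J_val hα hr]
  rw [show r + 2 = (r + 1) + 1 by ring, Gamma_add_one (by linarith : r + 1 ≠ 0),
    Gamma_add_one hr.ne']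
  have hΓ := Gamma_pos_of_pos hr
  have hp : (0:ℝ) < α ^ r := Real.rpow_pos_of_pos hα r
  have h1 : (1 / α) ^ (r + 1) = 1 / (α ^ r * α) := by
    rw [Real.div_rpow zero_le_one hα.le, Real.one_rpow, Real.rpow_add_one hα.ne']
  have h2 : (1 / α) ^ ((r + 1) + 1) = 1 / (α ^ r * α * α) := by
    rw [Real.div_rpow zero_le_one hα.le, Real.one_rpow, Real.rpow_add_one (by positivity),
      Real.rpow_add_one hα.ne']
  have h3 : (1 / α) ^ r = 1 / α ^ r := by
    rw [Real.div_rpow zero_le_one hα.le, Real.one_rpow]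
  rw [h1, h2, h3]
  field_simp
  ring

end GammaZB

/-- If `W ~ Gamma(r, α)` then its zero-biased distribution is `Gamma(r+1, α)`. -/
theorem gamma_zeroBiased (r α : ℝ) (hr : 0 < r) (hα : 0 < α) :
    IsZeroBiased (gammaMeasure r α) (gammaMeasure (r + 1) α) := by
  intro f hf hf'
  have hr1 : (0:ℝ) < r + 1 := by linarith
  rw [GammaZB.mean_gamma hr hα, GammaZB.var_gamma hr hα,
    GammaZB.integral_gamma_eq hr hα, GammaZB.integral_gamma_eq hr1 hα]
  have hΓ := Real.Gamma_pos_of_pos hr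
  have hp : (0:ℝ) < α ^ r := Real.rpow_pos_of_pos hα r
  -- Lipschitz bound on f
  have hlip : LipschitzWith 1 f := by
    apply lipschitzWith_of_nnnorm_deriv_le hf
    intro x
    rw [← NNReal.coe_le_coe, coe_nnnorm, Real.norm_eq_abs, NNReal.coe_one]
    exact hf' x
  have hfb : ∀ x : ℝ, |f x| ≤ |f 0| + |x| := by
    intro x
    have h1 := hlip.dist_le_mul x 0
    rw [Real.dist_eq, Real.dist_eq, NNReal.coe_one, one_mul, sub_zero] at h1
    have h2 : |f x| - |f 0| ≤ |f x - f 0| := abs_sub_abs_le_abs_sub _ _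
    linarith
  -- measurability
  have mf : Measurable f := hf.continuous.measurable
  have mE : Measurable (fun x : ℝ => exp (-(α * x))) :=
    (Real.continuous_exp.comp (continuous_const.mul continuous_id).neg).measurable
  have mrp : ∀ s : ℝ, Measurable (fun x : ℝ => x ^ s) := fun s => measurable_id'.pow_const s
  -- base integrabilities
  have I0 : IntegrableOn (fun x : ℝ => x ^ (r - 1) * exp (-(α * x))) (Ioi 0) :=
    GammaZB.integrable_rpow_exp hα (by linarith)
  have I1 : IntegrableOn (fun x : ℝ => x ^ r * exp (-(α * x))) (Ioi 0) :=
    GammaZB.integrable_rpow_exp hα (by linarith)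
  have I2 : IntegrableOn (fun x : ℝ => x ^ (r + 1) * exp (-(α * x))) (Ioi 0) :=
    GammaZB.integrable_rpow_exp hα (by linarith)
  have hxr : ∀ x : ℝ, x ≠ 0 → x ^ r = x ^ (r - 1) * x := by
    intro x hx
    rw [← Real.rpow_add_one hx]
    norm_num
  have hxr1 : ∀ x : ℝ, x ≠ 0 → x ^ (r + 1) = x ^ r * x := fun x hx => Real.rpow_add_one hx r
  -- integrability of the three main integrands
  have IA : IntegrableOn (fun x : ℝ => f x * (x ^ r * exp (-(α * x)))) (Ioi 0) := by
    have bint : IntegrableOn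
        (fun x : ℝ => |f 0| * (x ^ r * exp (-(α * x))) + x ^ (r + 1) * exp (-(α * x)))
        (Ioi 0) := (I1.const_mul _).add I2
    refine Integrable.mono' bint (mf.mul ((mrp r).mul mE)).aestronglyMeasurable ?_
    rw [ae_restrict_iff' measurableSet_Ioi]
    filter_upwards with x hx
    have hx0 : (0:ℝ) < x := hx
    have h1 : (0:ℝ) ≤ x ^ r * exp (-(α * x)) := by positivity
    have h2 : |f x| ≤ |f 0| + x := by
      have := hfb x; rwa [abs_of_pos hx0] at this
    calc ‖f x * (x ^ r * exp (-(α * x)))‖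
        = |f x| * (x ^ r * exp (-(α * x))) := by
          rw [norm_mul, Real.norm_eq_abs, Real.norm_eq_abs, abs_of_nonneg h1]
      _ ≤ (|f 0| + x) * (x ^ r * exp (-(α * x))) := mul_le_mul_of_nonneg_right h2 h1
      _ = |f 0| * (x ^ r * exp (-(α * x))) + x ^ (r + 1) * exp (-(α * x)) := by
          rw [hxr1 x (ne_of_gt hx)]; ring
  have IB : IntegrableOn (fun x : ℝ => f x * (x ^ (r - 1) * exp (-(α * x)))) (Ioi 0) := by
    have bint : IntegrableOn
        (fun x : ℝ => |f 0| * (x ^ (r - 1) * exp (-(α * x))) + x ^ r * exp (-(α * x)))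
        (Ioi 0) := (I0.const_mul _).add I1
    refine Integrable.mono' bint (mf.mul ((mrp (r - 1)).mul mE)).aestronglyMeasurable ?_
    rw [ae_restrict_iff' measurableSet_Ioi]
    filter_upwards with x hx
    have hx0 : (0:ℝ) < x := hx
    have h1 : (0:ℝ) ≤ x ^ (r - 1) * exp (-(α * x)) := by positivity
    have h2 : |f x| ≤ |f 0| + x := by
      have := hfb x; rwa [abs_of_pos hx0] at this
    calc ‖f x * (x ^ (r - 1) * exp (-(α * x)))‖
        = |f x| * (x ^ (r - 1) * exp (-(α * x))) := by
          rw [norm_mul, Real.norm_eq_abs, Real.norm_eq_abs, abs_of_nonneg h1]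
      _ ≤ (|f 0| + x) * (x ^ (r - 1) * exp (-(α * x))) := mul_le_mul_of_nonneg_right h2 h1
      _ = |f 0| * (x ^ (r - 1) * exp (-(α * x))) + x ^ r * exp (-(α * x)) := by
          rw [hxr x (ne_of_gt hx)]; ring
  have ID : IntegrableOn (fun x : ℝ => deriv f x * (x ^ r * exp (-(α * x)))) (Ioi 0) := by
    refine Integrable.mono' I1 ((measurable_deriv f).mul ((mrp r).mul mE)).aestronglyMeasurable ?_
    rw [ae_restrict_iff' measurableSet_Ioi]
    filter_upwards with x hx
    have hx0 : (0:ℝ) < x := hx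
    have h1 : (0:ℝ) ≤ x ^ r * exp (-(α * x)) := by positivity
    calc ‖deriv f x * (x ^ r * exp (-(α * x)))‖
        = |deriv f x| * (x ^ r * exp (-(α * x))) := by
          rw [norm_mul, Real.norm_eq_abs, Real.norm_eq_abs, abs_of_nonneg h1]
      _ ≤ 1 * (x ^ r * exp (-(α * x))) := mul_le_mul_of_nonneg_right (hf' x) h1
      _ = x ^ r * exp (-(α * x)) := one_mul _
  -- integration by parts
  have hderiv : ∀ x ∈ Ioi (0:ℝ), HasDerivAt (fun x => f x * (x ^ r * exp (-(α * x))))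
      (deriv f x * (x ^ r * exp (-(α * x)))
        + (r * (f x * (x ^ (r - 1) * exp (-(α * x))))
          - α * (f x * (x ^ r * exp (-(α * x)))))) x := by
    intro x hx
    have h1 : HasDerivAt (fun y : ℝ => y ^ r) (r * x ^ (r - 1)) x :=
      Real.hasDerivAt_rpow_const (Or.inl (ne_of_gt hx))
    have h0 : HasDerivAt (fun y : ℝ => -(α * y)) (-α) x := by
      exact ((hasDerivAt_id' x).const_mul α).neg.congr_deriv (by ring)
    have h2 : HasDerivAt (fun y : ℝ => exp (-(α * y))) (exp (-(α * x)) * (-α)) x :=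
      (Real.hasDerivAt_exp (-(α * x))).comp x h0 (h₂ := Real.exp)
    have h4 := ((hf x).hasDerivAt).fun_mul (h1.fun_mul h2)
    exact h4.congr_deriv (by ring)
  have IG : IntegrableOn (fun x : ℝ => deriv f x * (x ^ r * exp (-(α * x)))
      + (r * (f x * (x ^ (r - 1) * exp (-(α * x))))
        - α * (f x * (x ^ r * exp (-(α * x)))))) (Ioi 0) :=
    ID.add ((IB.const_mul r).sub (IA.const_mul α))
  have hcont : ContinuousWithinAt (fun x => f x * (x ^ r * exp (-(α * x)))) (Ici 0) 0 := by
    have c1 : ContinuousAt (fun x : ℝ => x ^ r) 0 :=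
      Real.continuousAt_rpow_const 0 r (Or.inr hr.le)
    exact ((hf.continuous.continuousAt).mul
      (c1.mul ((Real.continuous_exp.comp (continuous_const.mul continuous_id).neg).continuousAt))).continuousWithinAt
  have htop : Tendsto (fun x => f x * (x ^ r * exp (-(α * x)))) atTop (𝓝 0) := by
    have a1 := tendsto_rpow_mul_exp_neg_mul_atTop_nhds_zero r α hα
    have a2 := tendsto_rpow_mul_exp_neg_mul_atTop_nhds_zero (r + 1) α hα
    simp only [neg_mul] at a1 a2
    have t1 : Tendsto (fun x : ℝ => |f 0| * (x ^ r * exp (-(α * x)))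
        + x ^ (r + 1) * exp (-(α * x))) atTop (𝓝 0) := by
      simpa using (a1.const_mul |f 0|).add a2
    apply squeeze_zero_norm' ?_ t1
    filter_upwards [eventually_gt_atTop 0] with x hx
    have h1 : (0:ℝ) ≤ x ^ r * exp (-(α * x)) := by positivity
    have h2 : |f x| ≤ |f 0| + x := by
      have := hfb x; rwa [abs_of_pos hx] at this
    calc ‖f x * (x ^ r * exp (-(α * x)))‖
        = |f x| * (x ^ r * exp (-(α * x))) := by
          rw [norm_mul, Real.norm_eq_abs, Real.norm_eq_abs, abs_of_nonneg h1]
      _ ≤ (|f 0| + x) * (x ^ r * exp (-(α * x))) := mul_le_mul_of_nonneg_right h2 h1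
      _ = |f 0| * (x ^ r * exp (-(α * x))) + x ^ (r + 1) * exp (-(α * x)) := by
          rw [hxr1 x (ne_of_gt hx)]; ring
  have key := integral_Ioi_of_hasDerivAt_of_tendsto hcont hderiv IG htop
  rw [Real.zero_rpow hr.ne'] at key
  simp only [zero_mul, mul_zero, sub_zero, zero_sub, neg_zero] at key
  have Isub : IntegrableOn (fun x : ℝ => r * (f x * (x ^ (r - 1) * exp (-(α * x))))
      - α * (f x * (x ^ r * exp (-(α * x))))) (Ioi 0) :=
    (IB.const_mul r).sub (IA.const_mul α)
  rw [integral_add ID Isub,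
    integral_sub (IB.const_mul r) (IA.const_mul α), integral_const_mul, integral_const_mul] at key
  -- rewrite both sides of the goal
  have hc1 : ∀ x ∈ Ioi (0:ℝ), x ^ (r - 1) * exp (-(α * x)) * ((x - r / α) * f x)
      = f x * (x ^ r * exp (-(α * x))) - (r / α) * (f x * (x ^ (r - 1) * exp (-(α * x)))) := by
    intro x hx
    rw [hxr x (ne_of_gt hx)]
    ring
  have hc2 : ∀ x ∈ Ioi (0:ℝ), x ^ ((r + 1) - 1) * exp (-(α * x)) * deriv f x
      = deriv f x * (x ^ r * exp (-(α * x))) := by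
    intro x hx
    rw [show (r + 1) - 1 = r by ring]
    ring
  rw [setIntegral_congr_fun measurableSet_Ioi hc1, setIntegral_congr_fun measurableSet_Ioi hc2,
    integral_sub IA (IB.const_mul _), integral_const_mul,
    Real.Gamma_add_one hr.ne', Real.rpow_add_one hα.ne' r]
  set A := ∫ x in Ioi (0:ℝ), f x * (x ^ r * exp (-(α * x))) with hA
  set B := ∫ x in Ioi (0:ℝ), f x * (x ^ (r - 1) * exp (-(α * x))) with hB
  set D := ∫ x in Ioi (0:ℝ), deriv f x * (x ^ r * exp (-(α * x))) with hD
  have hDval : D = α * A - r * B := by linarith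
  rw [hDval]
  field_simp
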